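/- Ready simulation equivalence is strictly finer than conformance simulation equivalence: for all closed BCCSP processes p, q, if p ≲_RS q and q ≲_RS p then p ≡_CS q; moreover, for pairwise distinct actions a, b, c ∈ A, the processes a.b.0 and a.b.0 + a.(b.0 + c.0) satisfy a.b.0 ≡_CS a.b.0 + a.(b.0 + c.0) but not a.(b.0 + c.0) ≲_S a.b.0 (hence in particular not a.(b.0 + c.0) ≲_RS a.b.0). -/
import Mathlib


inductive Proc (A : Type) : Type
  | nil : Proc A
  | pre : A → Proc A → Proc A
  | add : Proc A → Proc A → Proc A

inductive Step {A : Type} : Proc A → A → Proc A → Prop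
  | pre (a : A) (p : Proc A) : Step (.pre a p) a p
  | addL {p : Proc A} {a : A} {p' : Proc A} (q : Proc A) :
      Step p a p' → Step (.add p q) a p'
  | addR {q : Proc A} {a : A} {q' : Proc A} (p : Proc A) :
      Step q a q' → Step (.add p q) a q'

/-- `initials p` is the set `I(p)` of actions that `p` can immediately perform. -/
def initials {A : Type} (p : Proc A) : Set A := {a | ∃ p', Step p a p'}

/-- `{Ar, Al, Abi}` is a partition of the action set `A` (cells may be empty). -/
def IsPartition {A : Type} (Ar Al Abi : Set A) : Prop :=
  (Ar ∪ Al ∪ Abi = Set.univ) ∧ Disjoint Ar Al ∧ Disjoint Ar Abi ∧ Disjoint Al Abi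

/-- Covariant-contravariant simulation w.r.t. covariant actions `Ar`,
contravariant actions `Al` and bivariant actions `Abi`. -/
def IsCCSim {A : Type} (Ar Al Abi : Set A) (S : Proc A → Proc A → Prop) : Prop :=
  ∀ p q, S p q →
    (∀ a ∈ Ar ∪ Abi, ∀ p', Step p a p' → ∃ q', Step q a q' ∧ S p' q') ∧
    (∀ a ∈ Al ∪ Abi, ∀ q', Step q a q' → ∃ p', Step p a p' ∧ S p' q')

/-- The covariant-contravariant simulation preorder `p ≲_CC q`. -/
def ccLe {A : Type} (Ar Al Abi : Set A) (p q : Proc A) : Prop :=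
  ∃ S, IsCCSim Ar Al Abi S ∧ S p q

/-- Covariant-contravariant simulation equivalence `p ≡_CC q`. -/
def ccEq {A : Type} (Ar Al Abi : Set A) (p q : Proc A) : Prop :=
  ccLe Ar Al Abi p q ∧ ccLe Ar Al Abi q p

/-- Conformance simulation. -/
def IsConfSim {A : Type} (R : Proc A → Proc A → Prop) : Prop :=
  ∀ p q, R p q →
    initials p ⊆ initials q ∧
    (∀ a q', Step q a q' → a ∈ initials p → ∃ p', Step p a p' ∧ R p' q')

/-- The conformance simulation preorder `p ≲_CS q`. -/
def csLe {A : Type} (p q : Proc A) : Prop := ∃ R, IsConfSim R ∧ R p q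

/-- Conformance simulation equivalence `p ≡_CS q`. -/
def csEq {A : Type} (p q : Proc A) : Prop := csLe p q ∧ csLe q p

/-- The conformance precongruence `p ⊑_CS q`. -/
def csPre {A : Type} (p q : Proc A) : Prop := csLe p q ∧ initials q ⊆ initials p

/-- Plain simulation. -/
def IsSim {A : Type} (S : Proc A → Proc A → Prop) : Prop :=
  ∀ p q, S p q → ∀ a p', Step p a p' → ∃ q', Step q a q' ∧ S p' q'

/-- The plain simulation preorder `p ≲_S q`. -/
def simLe {A : Type} (p q : Proc A) : Prop := ∃ S, IsSim S ∧ S p q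

/-- Ready simulation. -/
def IsRSim {A : Type} (S : Proc A → Proc A → Prop) : Prop :=
  ∀ p q, S p q → initials p = initials q ∧
    (∀ a p', Step p a p' → ∃ q', Step q a q' ∧ S p' q')

/-- The ready simulation preorder `p ≲_RS q`. -/
def rsLe {A : Type} (p q : Proc A) : Prop := ∃ S, IsRSim S ∧ S p q

/-- Ready conformance simulation: a conformance simulation that additionally
guarantees `I(q) ⊆ I(p)` for all related pairs. -/
def IsRCSim {A : Type} (R : Proc A → Proc A → Prop) : Prop :=
  IsConfSim R ∧ ∀ p q, R p q → initials q ⊆ initials p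

/-- The ready conformance simulation preorder `p ≲_RCS q`. -/
def rcsLe {A : Type} (p q : Proc A) : Prop := ∃ R, IsRCSim R ∧ R p q

/-- Open BCCSP terms (with variables indexed by `ℕ`). -/
inductive Term (A : Type) : Type
  | var : ℕ → Term A
  | nil : Term A
  | pre : A → Term A → Term A
  | add : Term A → Term A → Term A

/-- Closed substitution applied to an open term. -/
def Term.subst {A : Type} (σ : ℕ → Proc A) : Term A → Proc A
  | .var n => σ n
  | .nil => .nil
  | .pre a t => .pre a (t.subst σ)
  | .add s t => .add (s.subst σ) (t.subst σ)

/-- View a closed process as an (open) term. -/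
def Proc.toTerm {A : Type} : Proc A → Term A
  | .nil => .nil
  | .pre a p => .pre a p.toTerm
  | .add p q => .add p.toTerm q.toTerm

/-- Inequational derivability (between closed processes) from a set `E` of
inequations between open terms: the least relation containing all substitution
instances of `E` and closed under reflexivity, transitivity and the congruence
rules for prefixing and `+`. -/
inductive DerivLe {A : Type} (E : Set (Term A × Term A)) : Proc A → Proc A → Prop
  | ax (l r : Term A) (σ : ℕ → Proc A) : (l, r) ∈ E → DerivLe E (l.subst σ) (r.subst σ)
  | refl (p : Proc A) : DerivLe E p p
  | trans {p q r : Proc A} : DerivLe E p q → DerivLe E q r → DerivLe E p r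
  | pre (a : A) {p q : Proc A} : DerivLe E p q → DerivLe E (.pre a p) (.pre a q)
  | add {p q r s : Proc A} : DerivLe E p q → DerivLe E r s → DerivLe E (.add p r) (.add q s)

/-- Equational derivability (between closed processes) from a set `E` of
equations between open terms. -/
inductive DerivEq {A : Type} (E : Set (Term A × Term A)) : Proc A → Proc A → Prop
  | ax (l r : Term A) (σ : ℕ → Proc A) : (l, r) ∈ E → DerivEq E (l.subst σ) (r.subst σ)
  | refl (p : Proc A) : DerivEq E p p
  | symm {p q : Proc A} : DerivEq E p q → DerivEq E q p
  | trans {p q r : Proc A} : DerivEq E p q → DerivEq E q r → DerivEq E p r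
  | pre (a : A) {p q : Proc A} : DerivEq E p q → DerivEq E (.pre a p) (.pre a q)
  | add {p q r s : Proc A} : DerivEq E p q → DerivEq E r s → DerivEq E (.add p r) (.add q s)

/-- Substitution of (possibly open) terms for variables. -/
def Term.substT {A : Type} (σ : ℕ → Term A) : Term A → Term A
  | .var n => σ n
  | .nil => .nil
  | .pre a t => .pre a (t.substT σ)
  | .add s t => .add (s.substT σ) (t.substT σ)

/-- Equational derivability between open terms from a set `E` of equations. -/
inductive TDerivEq {A : Type} (E : Set (Term A × Term A)) : Term A → Term A → Prop
  | ax (l r : Term A) (σ : ℕ → Term A) : (l, r) ∈ E → TDerivEq E (l.substT σ) (r.substT σ)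
  | refl (t : Term A) : TDerivEq E t t
  | symm {s t : Term A} : TDerivEq E s t → TDerivEq E t s
  | trans {s t u : Term A} : TDerivEq E s t → TDerivEq E t u → TDerivEq E s u
  | pre (a : A) {s t : Term A} : TDerivEq E s t → TDerivEq E (.pre a s) (.pre a t)
  | add {s t u v : Term A} : TDerivEq E s t → TDerivEq E u v → TDerivEq E (.add s u) (.add t v)

/-- The bisimulation axioms B1–B4, as equations. -/
def BEqns (A : Type) : Set (Term A × Term A) :=
  { (.add (.var 0) (.var 1), .add (.var 1) (.var 0)),
    (.add (.add (.var 0) (.var 1)) (.var 2), .add (.var 0) (.add (.var 1) (.var 2))),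
    (.add (.var 0) (.var 0), .var 0),
    (.add (.var 0) .nil, .var 0) }

/-- The bisimulation axioms B1–B4, each used as two inequations. -/
def BIneqs (A : Type) : Set (Term A × Term A) := BEqns A ∪ Prod.swap '' BEqns A

lemma initials_pre {A : Type} (a : A) (p : Proc A) :
    initials (Proc.pre a p) = {a} := by
  ext x; constructor
  · rintro ⟨p', h⟩; cases h; rfl
  · rintro rfl; exact ⟨p, Step.pre _ p⟩

lemma rsLe_csLe_rev {A : Type} {p q : Proc A} (h : rsLe p q) : csLe q p := by
  obtain ⟨S, hS, hpq⟩ := h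
  refine ⟨fun x y => S y x, ?_, hpq⟩
  intro x y hxy
  obtain ⟨hinit, hstep⟩ := hS y x hxy
  exact ⟨hinit ▸ le_refl _, fun a y' hy' _ => hstep a y' hy'⟩

/-- Ready simulation equivalence is strictly finer than conformance simulation
equivalence: `≡_RS ⊆ ≡_CS`, and for distinct actions `a, b, c` we have
`a.b.0 ≡_CS a.b.0 + a.(b.0 + c.0)` while `a.(b.0 + c.0)` is not (plainly, nor
readily) simulated by `a.b.0`. -/
theorem rs_strictly_finer_than_cs {A : Type} (a b c : A)
    (hab : a ≠ b) (hac : a ≠ c) (hbc : b ≠ c) :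
    (∀ p q : Proc A, rsLe p q → rsLe q p → csEq p q) ∧
    csEq (Proc.pre a (.pre b .nil))
      (.add (.pre a (.pre b .nil)) (.pre a (.add (.pre b .nil) (.pre c .nil)))) ∧
    ¬ simLe (Proc.pre a (.add (.pre b .nil) (.pre c .nil))) (.pre a (.pre b .nil)) ∧
    ¬ rsLe (Proc.pre a (.add (.pre b .nil) (.pre c .nil))) (.pre a (.pre b .nil)) := by
  refine ⟨fun p q h1 h2 => ⟨rsLe_csLe_rev h2, rsLe_csLe_rev h1⟩, ⟨?_, ?_⟩, ?_, ?_⟩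
  · -- csLe P Q
    refine ⟨fun x y =>
      (x = Proc.pre a (.pre b .nil) ∧
        y = Proc.add (.pre a (.pre b .nil)) (.pre a (.add (.pre b .nil) (.pre c .nil)))) ∨
      (x = Proc.pre b .nil ∧ y = Proc.pre b .nil) ∨
      (x = Proc.pre b .nil ∧ y = Proc.add (.pre b .nil) (.pre c .nil)) ∨
      (x = Proc.nil ∧ y = Proc.nil), ?_, Or.inl ⟨rfl, rfl⟩⟩
    rintro x y (⟨rfl, rfl⟩ | ⟨rfl, rfl⟩ | ⟨rfl, rfl⟩ | ⟨rfl, rfl⟩)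
    · constructor
      · rintro z ⟨p', h⟩; cases h; exact ⟨_, Step.addL _ (Step.pre a _)⟩
      · rintro z q' h _
        rcases h with _ | ⟨_, h⟩ | ⟨_, h⟩ <;> cases h
        · exact ⟨_, Step.pre a _, Or.inr (Or.inl ⟨rfl, rfl⟩)⟩
        · exact ⟨_, Step.pre a _, Or.inr (Or.inr (Or.inl ⟨rfl, rfl⟩))⟩
    · exact ⟨le_refl _, fun z q' h _ => by
        cases h; exact ⟨_, Step.pre b _, Or.inr (Or.inr (Or.inr ⟨rfl, rfl⟩))⟩⟩
    · constructor
      · rintro z ⟨p', h⟩; cases h; exact ⟨_, Step.addL _ (Step.pre b _)⟩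
      · rintro z q' h hz
        rw [initials_pre] at hz
        rcases h with _ | ⟨_, h⟩ | ⟨_, h⟩ <;> cases h
        · exact ⟨_, Step.pre b _, Or.inr (Or.inr (Or.inr ⟨rfl, rfl⟩))⟩
        · exact absurd hz hbc.symm
    · exact ⟨le_refl _, fun z q' h _ => by cases h⟩
  · -- csLe Q P
    refine ⟨fun x y =>
      (x = Proc.add (.pre a (.pre b .nil)) (.pre a (.add (.pre b .nil) (.pre c .nil))) ∧
        y = Proc.pre a (.pre b .nil)) ∨
      (x = Proc.pre b .nil ∧ y = Proc.pre b .nil) ∨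
      (x = Proc.nil ∧ y = Proc.nil), ?_, Or.inl ⟨rfl, rfl⟩⟩
    rintro x y (⟨rfl, rfl⟩ | ⟨rfl, rfl⟩ | ⟨rfl, rfl⟩)
    · constructor
      · rintro z ⟨p', h⟩
        rcases h with _ | ⟨_, h⟩ | ⟨_, h⟩ <;> cases h <;> exact ⟨_, Step.pre a _⟩
      · rintro z q' h _
        cases h
        exact ⟨_, Step.addL _ (Step.pre a _), Or.inr (Or.inl ⟨rfl, rfl⟩)⟩
    · exact ⟨le_refl _, fun z q' h _ => by
        cases h; exact ⟨_, Step.pre b _, Or.inr (Or.inr ⟨rfl, rfl⟩)⟩⟩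
    · exact ⟨le_refl _, fun z q' h _ => by cases h⟩
  · -- not simLe
    rintro ⟨S, hS, h0⟩
    obtain ⟨q1, hq1, hS1⟩ := hS _ _ h0 a (.add (.pre b .nil) (.pre c .nil)) (Step.pre a _)
    cases hq1
    obtain ⟨q2, hq2, _⟩ := hS _ _ hS1 c .nil (Step.addR _ (Step.pre c _))
    cases hq2
    exact hbc rfl
  · -- not rsLe
    rintro ⟨S, hS, h0⟩
    obtain ⟨q1, hq1, hS1⟩ := (hS _ _ h0).2 a (.add (.pre b .nil) (.pre c .nil)) (Step.pre a _)
    cases hq1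
    obtain ⟨q2, hq2, _⟩ := (hS _ _ hS1).2 c .nil (Step.addR _ (Step.pre c _))
    cases hq2
    exact hbc rfl
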